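/- For every μ > -1, the functionals G_{j,μ}(f) = ∫₀¹ t^μ(1-t)^μ f(t mⱼ + (1-t) m*) dt (j = 1,2,3) together with the three edge averages are unisolvent on ℙ₂: any polynomial of degree ≤ 2 annihilated by all six functionals is zero. -/

import Mathlib

open MeasureTheory

/-- Edge midpoints of the triangle. -/
noncomputable def midpt (v : Fin 3 → (Fin 2 → ℝ)) (j : Fin 3) : Fin 2 → ℝ :=
  (v (j + 1) + v (j + 2)) / 2

/-- Barycenter of the triangle. -/
noncomputable def barycen (v : Fin 3 → (Fin 2 → ℝ)) : Fin 2 → ℝ :=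
  (v 0 + v 1 + v 2) / 3

namespace SecondClassAux

open MvPolynomial intervalIntegral

lemma fin2_finsupp_eq (m : Fin 2 →₀ ℕ) :
    m = Finsupp.single 0 (m 0) + Finsupp.single 1 (m 1) := by
  ext i
  fin_cases i <;> simp [Finsupp.single_apply]

lemma decomp (p : MvPolynomial (Fin 2) ℝ) (hp : p.totalDegree ≤ 2) :
    ∃ b0 b1 b2 b3 b4 b5 : ℝ, ∀ z : Fin 2 → ℝ,
      eval z p = b0 + b1 * z 0 + b2 * z 1 + b3 * (z 0)^2 + b4 * (z 0 * z 1) + b5 * (z 1)^2 := by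
  refine ⟨coeff 0 p, coeff (Finsupp.single 0 1) p, coeff (Finsupp.single 1 1) p,
    coeff (Finsupp.single 0 2) p, coeff (Finsupp.single 0 1 + Finsupp.single 1 1) p,
    coeff (Finsupp.single 1 2) p, ?_⟩
  have key : p = monomial 0 (coeff 0 p)
      + monomial (Finsupp.single 0 1) (coeff (Finsupp.single 0 1) p)
      + monomial (Finsupp.single 1 1) (coeff (Finsupp.single 1 1) p)
      + monomial (Finsupp.single 0 2) (coeff (Finsupp.single 0 2) p)
      + monomial (Finsupp.single 0 1 + Finsupp.single 1 1)
          (coeff (Finsupp.single 0 1 + Finsupp.single 1 1) p)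
      + monomial (Finsupp.single 1 2) (coeff (Finsupp.single 1 2) p) := by
    ext m
    simp only [coeff_add, coeff_monomial]
    by_cases hdeg : m 0 + m 1 ≤ 2
    · have hm := fin2_finsupp_eq m
      have h0 : m 0 ≤ 2 := le_trans (Nat.le_add_right _ _) hdeg
      have h1 : m 1 ≤ 2 := le_trans (Nat.le_add_left _ _) hdeg
      interval_cases H0 : m 0 <;> interval_cases H1 : m 1 <;> rw [hm] <;>
        first
          | (exfalso; omega)
          | norm_num [Finsupp.ext_iff, Fin.forall_fin_two, Finsupp.single_apply]
    · have hz : coeff m p = 0 := by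
        apply coeff_eq_zero_of_totalDegree_lt
        have hs : (∑ i ∈ m.support, m i) = m 0 + m 1 := by
          rw [show (∑ i ∈ m.support, m i) = m.sum (fun _ e => e) from rfl,
            Finsupp.sum_fintype _ _ (fun _ => rfl), Fin.sum_univ_two]
        rw [hs]; omega
      have c1 : ¬((0 : Fin 2 →₀ ℕ) = m) := fun h => hdeg (by rw [← h]; simp)
      have c2 : ¬(Finsupp.single (0 : Fin 2) 1 = m) := fun h => hdeg (by
        rw [← h]; simp [Finsupp.single_apply])
      have c3 : ¬(Finsupp.single (1 : Fin 2) 1 = m) := fun h => hdeg (by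
        rw [← h]; simp [Finsupp.single_apply])
      have c4 : ¬(Finsupp.single (0 : Fin 2) 2 = m) := fun h => hdeg (by
        rw [← h]; simp [Finsupp.single_apply])
      have c5 : ¬(Finsupp.single (0 : Fin 2) 1 + Finsupp.single 1 1 = m) := fun h => hdeg (by
        rw [← h]; simp [Finsupp.single_apply])
      have c6 : ¬(Finsupp.single (1 : Fin 2) 2 = m) := fun h => hdeg (by
        rw [← h]; simp [Finsupp.single_apply])
      rw [hz, if_neg c1, if_neg c2, if_neg c3, if_neg c4, if_neg c5, if_neg c6]
      norm_num
  intro z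
  conv_lhs => rw [key]
  simp only [map_add, eval_monomial]
  simp [Finsupp.prod_add_index, Finsupp.prod_single_index, pow_zero]

open Submodule in
lemma surj (v : Fin 3 → (Fin 2 → ℝ)) (hv : AffineIndependent ℝ v) (y : Fin 2 → ℝ) :
    ∃ x0 x1 : ℝ, ∀ i, y i = v 0 i + x0 * (v 1 i - v 0 i) + x1 * (v 2 i - v 0 i) := by
  have h := (affineIndependent_iff_linearIndependent_vsub ℝ v 0).mp hv
  set e : Fin 2 → (Fin 2 → ℝ) := ![v 1 - v 0, v 2 - v 0] with he
  have hinj : Function.Injective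
      (fun j : Fin 2 => (![⟨1, by decide⟩, ⟨2, by decide⟩] : Fin 2 → {x : Fin 3 // x ≠ 0}) j) := by
    decide
  have hli : LinearIndependent ℝ e := by
    have := h.comp _ hinj
    convert this using 1
    funext j
    fin_cases j <;> rfl
    all_goals rfl
  have hsp : span ℝ (Set.range e) = ⊤ := by
    apply hli.span_eq_top_of_card_eq_finrank
    simp [Module.finrank_fintype_fun_eq_card]
  have hy : (y - v 0) ∈ span ℝ ({v 1 - v 0, v 2 - v 0} : Set (Fin 2 → ℝ)) := by
    have : Set.range e = {v 1 - v 0, v 2 - v 0} := by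
      ext x
      simp [he, Fin.exists_fin_two, or_comm]
    rw [← this, hsp]; trivial
  obtain ⟨a, b, hab⟩ := mem_span_pair.mp hy
  refine ⟨a, b, fun i => ?_⟩
  have := congr_fun hab i
  simp [Pi.smul_apply, smul_eq_mul] at this
  linarith [this]

variable {μ : ℝ}

lemma w_intable (hμ : -1 < μ) :
    IntervalIntegrable (fun t : ℝ => t ^ μ * (1 - t) ^ μ) volume 0 1 := by
  have h1 : IntervalIntegrable (fun t : ℝ => t ^ μ * (1 - t) ^ μ) volume 0 (1/2) := by
    apply IntervalIntegrable.mul_continuousOn (intervalIntegrable_rpow' hμ)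
    apply ContinuousOn.rpow_const (by fun_prop)
    intro x hx
    rw [Set.uIcc_of_le (by norm_num)] at hx
    left; nlinarith [hx.1, hx.2]
  have h2 : IntervalIntegrable (fun t : ℝ => t ^ μ * (1 - t) ^ μ) volume (1/2) 1 := by
    have hb : IntervalIntegrable (fun t : ℝ => (1 - t) ^ μ) volume (1/2) 1 := by
      have := ((intervalIntegrable_rpow' hμ (a := 1/2) (b := 0)).comp_sub_left 1).symm
      norm_num at this
      exact this.symm
    apply hb.continuousOn_mul
    apply ContinuousOn.rpow_const (by fun_prop)
    intro x hx
    rw [Set.uIcc_of_le (by norm_num)] at hx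
    left; nlinarith [hx.1, hx.2]
  exact h1.trans h2

lemma wg_intable (hμ : -1 < μ) {g : ℝ → ℝ} (hg : Continuous g) :
    IntervalIntegrable (fun t : ℝ => t ^ μ * (1 - t) ^ μ * g t) volume 0 1 :=
  (w_intable hμ).mul_continuousOn hg.continuousOn

lemma w_pos (hμ : -1 < μ) : 0 < ∫ t in (0:ℝ)..1, t ^ μ * (1 - t) ^ μ := by
  apply intervalIntegral_pos_of_pos_on (w_intable hμ)
  · intro x hx
    exact mul_pos (Real.rpow_pos_of_pos hx.1 μ) (Real.rpow_pos_of_pos (by linarith [hx.2]) μ)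
  · norm_num

lemma w_symm (hμ : -1 < μ) (g : ℝ → ℝ) :
    (∫ t in (0:ℝ)..1, t ^ μ * (1 - t) ^ μ * g t)
      = ∫ t in (0:ℝ)..1, t ^ μ * (1 - t) ^ μ * g (1 - t) := by
  have := intervalIntegral.integral_comp_sub_left
    (a := 0) (b := 1) (fun t => t ^ μ * (1 - t) ^ μ * g t) 1
  norm_num at this
  rw [← this]
  congr 1
  funext t
  ring_nf

lemma w_moments (hμ : -1 < μ) :
    ∃ P D : ℝ, 0 < P ∧ 0 ≤ D ∧ D ≤ P/4 ∧
      ∀ a b c : ℝ, (∫ t in (0:ℝ)..1, t ^ μ * (1 - t) ^ μ * (a + b*t + c*t^2))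
        = P * (a + b/2 + c/4) + D * c := by
  classical
  have int1 : IntervalIntegrable (fun t : ℝ => t ^ μ * (1 - t) ^ μ * 1) volume 0 1 :=
    wg_intable hμ continuous_const
  have intt : IntervalIntegrable (fun t : ℝ => t ^ μ * (1 - t) ^ μ * t) volume 0 1 :=
    wg_intable hμ continuous_id
  have intt2 : IntervalIntegrable (fun t : ℝ => t ^ μ * (1 - t) ^ μ * t^2) volume 0 1 :=
    wg_intable hμ (continuous_pow 2)
  have intq : IntervalIntegrable (fun t : ℝ => t ^ μ * (1 - t) ^ μ * (t - 1/2)^2) volume 0 1 :=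
    wg_intable hμ (by fun_prop)
  set P : ℝ := ∫ t in (0:ℝ)..1, t ^ μ * (1 - t) ^ μ * 1 with hP
  set I1 : ℝ := ∫ t in (0:ℝ)..1, t ^ μ * (1 - t) ^ μ * t with hI1
  set I2 : ℝ := ∫ t in (0:ℝ)..1, t ^ μ * (1 - t) ^ μ * t^2 with hI2
  set D : ℝ := ∫ t in (0:ℝ)..1, t ^ μ * (1 - t) ^ μ * (t - 1/2)^2 with hD
  have wnn : ∀ t : ℝ, t ∈ Set.Icc (0:ℝ) 1 → 0 ≤ t ^ μ * (1 - t) ^ μ := by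
    intro t ht
    exact mul_nonneg (Real.rpow_nonneg ht.1 μ) (Real.rpow_nonneg (by linarith [ht.2]) μ)
  have hPpos : 0 < P := by
    have h := w_pos hμ
    have he : P = ∫ t in (0:ℝ)..1, t ^ μ * (1 - t) ^ μ := by
      rw [hP]; congr 1; funext t; ring
    rw [he]; exact h
  have hsym : I1 = ∫ t in (0:ℝ)..1, t ^ μ * (1 - t) ^ μ * (1 - t) := w_symm hμ (fun t => t)
  have hflip : (∫ t in (0:ℝ)..1, t ^ μ * (1 - t) ^ μ * (1 - t)) = P - I1 := by
    have key : ∀ t : ℝ, t ^ μ * (1 - t) ^ μ * (1 - t)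
        = t ^ μ * (1 - t) ^ μ * 1 - t ^ μ * (1 - t) ^ μ * t := fun t => by ring
    simp only [key]
    rw [intervalIntegral.integral_sub int1 intt]
  have hI1half : I1 = P/2 := by
    have h := hsym.trans hflip
    linarith
  have hI2eq : I2 = D + I1 - P/4 := by
    have key : ∀ t : ℝ, t ^ μ * (1 - t) ^ μ * t^2
        = t ^ μ * (1 - t) ^ μ * (t - 1/2)^2
          + (t ^ μ * (1 - t) ^ μ * t - (1/4) * (t ^ μ * (1 - t) ^ μ * 1)) :=
      fun t => by ring
    simp only [hI2, key]
    rw [intervalIntegral.integral_add intq (intt.sub (int1.const_mul (1/4))),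
      intervalIntegral.integral_sub intt (int1.const_mul (1/4)),
      intervalIntegral.integral_const_mul]
    rw [← hD, ← hI1, ← hP]; ring
  have hD0 : 0 ≤ D := by
    apply intervalIntegral.integral_nonneg (by norm_num)
    intro t ht
    exact mul_nonneg (wnn t ht) (sq_nonneg _)
  have hD4 : D ≤ P/4 := by
    have h0 : 0 ≤ ∫ t in (0:ℝ)..1,
        ((1/4) * (t ^ μ * (1 - t) ^ μ * 1) - t ^ μ * (1 - t) ^ μ * (t - 1/2)^2) := by
      apply intervalIntegral.integral_nonneg (by norm_num)
      intro t ht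
      have h1 : (t - 1/2)^2 ≤ 1/4 := by nlinarith [ht.1, ht.2]
      have h2 := wnn t ht
      nlinarith
    rw [intervalIntegral.integral_sub (int1.const_mul (1/4)) intq,
      intervalIntegral.integral_const_mul, ← hP, ← hD] at h0
    linarith
  refine ⟨P, D, hPpos, hD0, hD4, ?_⟩
  intro a b c
  have key : ∀ t : ℝ, t ^ μ * (1 - t) ^ μ * (a + b*t + c*t^2)
      = a * (t ^ μ * (1 - t) ^ μ * 1)
        + (b * (t ^ μ * (1 - t) ^ μ * t) + c * (t ^ μ * (1 - t) ^ μ * t^2)) := fun t => by ring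
  simp only [key]
  rw [intervalIntegral.integral_add (int1.const_mul a) ((intt.const_mul b).add (intt2.const_mul c)),
    intervalIntegral.integral_add (intt.const_mul b) (intt2.const_mul c),
    intervalIntegral.integral_const_mul, intervalIntegral.integral_const_mul,
    intervalIntegral.integral_const_mul, ← hP, ← hI1, ← hI2]
  rw [hI2eq, hI1half]
  ring

lemma poly_int (a b c : ℝ) :
    (∫ t in (0:ℝ)..1, (a + b*t + c*t^2)) = a + b/2 + c/3 := by
  have h1 : IntervalIntegrable (fun t : ℝ => a + b*t) volume 0 1 :=
    (by fun_prop : Continuous fun t : ℝ => a + b*t).intervalIntegrable 0 1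
  have h2 : IntervalIntegrable (fun t : ℝ => c*t^2) volume 0 1 :=
    (by fun_prop : Continuous fun t : ℝ => c*t^2).intervalIntegrable 0 1
  have h3 : IntervalIntegrable (fun _ : ℝ => a) volume 0 1 :=
    intervalIntegrable_const
  have h4 : IntervalIntegrable (fun t : ℝ => b*t) volume 0 1 :=
    (by fun_prop : Continuous fun t : ℝ => b*t).intervalIntegrable 0 1
  rw [intervalIntegral.integral_add h1 h2, intervalIntegral.integral_add h3 h4,
    intervalIntegral.integral_const, intervalIntegral.integral_const_mul,
    intervalIntegral.integral_const_mul, integral_id, integral_pow]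
  norm_num
  ring

end SecondClassAux

open SecondClassAux in
theorem second_class_unisolvence
    (v : Fin 3 → (Fin 2 → ℝ)) (hv : AffineIndependent ℝ v)
    (μ : ℝ) (hμ : -1 < μ)
    (p : MvPolynomial (Fin 2) ℝ) (hp : p.totalDegree ≤ 2)
    (hedge : ∀ j : Fin 3,
      (∫ t in (0:ℝ)..1,
        MvPolynomial.eval (t • v (j + 1) + (1 - t) • v (j + 2)) p) = 0)
    (hG : ∀ j : Fin 3,
      (∫ t in (0:ℝ)..1, t ^ μ * (1 - t) ^ μ *
        MvPolynomial.eval (t • midpt v j + (1 - t) • barycen v) p) = 0) :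
    p = 0 := by
  obtain ⟨b0, b1, b2, b3, b4, b5, hb⟩ := decomp p hp
  obtain ⟨A, hA⟩ : ∃ x : ℝ, x = v 0 0 := ⟨_, rfl⟩
  obtain ⟨B, hB⟩ : ∃ x : ℝ, x = v 0 1 := ⟨_, rfl⟩
  obtain ⟨u0, hu0⟩ : ∃ x : ℝ, x = v 1 0 - v 0 0 := ⟨_, rfl⟩
  obtain ⟨u1, hu1⟩ : ∃ x : ℝ, x = v 1 1 - v 0 1 := ⟨_, rfl⟩
  obtain ⟨w0, hw0⟩ : ∃ x : ℝ, x = v 2 0 - v 0 0 := ⟨_, rfl⟩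
  obtain ⟨w1, hw1⟩ : ∃ x : ℝ, x = v 2 1 - v 0 1 := ⟨_, rfl⟩
  obtain ⟨c0, hc0⟩ : ∃ x : ℝ, x = b0 + b1*A + b2*B + b3*A^2 + b4*(A*B) + b5*B^2 := ⟨_, rfl⟩
  obtain ⟨c1, hc1⟩ : ∃ x : ℝ, x = b1*u0 + b2*u1 + 2*b3*A*u0 + b4*(A*u1 + B*u0) + 2*b5*B*u1 := ⟨_, rfl⟩
  obtain ⟨c2, hc2⟩ : ∃ x : ℝ, x = b1*w0 + b2*w1 + 2*b3*A*w0 + b4*(A*w1 + B*w0) + 2*b5*B*w1 := ⟨_, rfl⟩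
  obtain ⟨c3, hc3⟩ : ∃ x : ℝ, x = b3*u0^2 + b4*(u0*u1) + b5*u1^2 := ⟨_, rfl⟩
  obtain ⟨c4, hc4⟩ : ∃ x : ℝ, x = 2*b3*(u0*w0) + b4*(u0*w1 + u1*w0) + 2*b5*(u1*w1) := ⟨_, rfl⟩
  obtain ⟨c5, hc5⟩ : ∃ x : ℝ, x = b3*w0^2 + b4*(w0*w1) + b5*w1^2 := ⟨_, rfl⟩
  have hF : ∀ x y : ℝ,
      MvPolynomial.eval (fun i => v 0 i + x * (v 1 i - v 0 i) + y * (v 2 i - v 0 i)) p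
        = c0 + c1*x + c2*y + c3*x^2 + c4*(x*y) + c5*y^2 := by
    intro x y
    rw [hb]
    rw [hc0, hc1, hc2, hc3, hc4, hc5, hA, hB, hu0, hu1, hw0, hw1]
    ring
  -- edge equations
  have e0 : (c0 + c2 + c5) + (c1 - c2 + c4 - 2*c5)/2 + (c3 - c4 + c5)/3 = 0 := by
    rw [← poly_int (c0 + c2 + c5) (c1 - c2 + c4 - 2*c5) (c3 - c4 + c5)]
    rw [show (∫ t in (0:ℝ)..1, ((c0 + c2 + c5) + (c1 - c2 + c4 - 2*c5)*t + (c3 - c4 + c5)*t^2))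
        = ∫ t in (0:ℝ)..1, MvPolynomial.eval (t • v (0 + 1) + (1 - t) • v (0 + 2)) p from ?_]
    · exact hedge 0
    apply intervalIntegral.integral_congr
    intro t _
    beta_reduce
    have hpt : (t • v (0 + 1) + (1 - t) • v (0 + 2))
        = (fun i => v 0 i + t * (v 1 i - v 0 i) + (1 - t) * (v 2 i - v 0 i)) := by
      funext i
      show t * v 1 i + (1 - t) * v 2 i = _
      ring
    rw [hpt, hF]
    ring
  have e1 : c0 + c2/2 + c5/3 = 0 := by
    rw [← poly_int c0 c2 c5]
    rw [show (∫ t in (0:ℝ)..1, (c0 + c2*t + c5*t^2))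
        = ∫ t in (0:ℝ)..1, MvPolynomial.eval (t • v (1 + 1) + (1 - t) • v (1 + 2)) p from ?_]
    · exact hedge 1
    apply intervalIntegral.integral_congr
    intro t _
    beta_reduce
    have hpt : (t • v (1 + 1) + (1 - t) • v (1 + 2))
        = (fun i => v 0 i + (0:ℝ) * (v 1 i - v 0 i) + t * (v 2 i - v 0 i)) := by
      funext i
      show t * v 2 i + (1 - t) * v 0 i = _
      ring
    rw [hpt, hF]
    ring
  have e2 : (c0 + c1 + c3) + (-c1 - 2*c3)/2 + c3/3 = 0 := by
    rw [← poly_int (c0 + c1 + c3) (-c1 - 2*c3) c3]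
    rw [show (∫ t in (0:ℝ)..1, ((c0 + c1 + c3) + (-c1 - 2*c3)*t + c3*t^2))
        = ∫ t in (0:ℝ)..1, MvPolynomial.eval (t • v (2 + 1) + (1 - t) • v (2 + 2)) p from ?_]
    · exact hedge 2
    apply intervalIntegral.integral_congr
    intro t _
    beta_reduce
    have hpt : (t • v (2 + 1) + (1 - t) • v (2 + 2))
        = (fun i => v 0 i + (1 - t) * (v 1 i - v 0 i) + (0:ℝ) * (v 2 i - v 0 i)) := by
      funext i
      show t * v 0 i + (1 - t) * v 1 i = _
      ring
    rw [hpt, hF]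
    ring
  -- weighted equations
  obtain ⟨P, D, hPpos, hD0, hD4, hmom⟩ := w_moments hμ
  have g0 : P * ((c0 + (c1 + c2)/3 + (c3 + c4 + c5)/9) + ((c1 + c2)/6 + (c3 + c4 + c5)/9)/2
      + ((c3 + c4 + c5)/36)/4) + D * ((c3 + c4 + c5)/36) = 0 := by
    rw [← hmom (c0 + (c1 + c2)/3 + (c3 + c4 + c5)/9) ((c1 + c2)/6 + (c3 + c4 + c5)/9)
      ((c3 + c4 + c5)/36)]
    rw [show (∫ t in (0:ℝ)..1, t ^ μ * (1 - t) ^ μ * ((c0 + (c1 + c2)/3 + (c3 + c4 + c5)/9)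
          + ((c1 + c2)/6 + (c3 + c4 + c5)/9)*t + ((c3 + c4 + c5)/36)*t^2))
        = ∫ t in (0:ℝ)..1, t ^ μ * (1 - t) ^ μ *
            MvPolynomial.eval (t • midpt v 0 + (1 - t) • barycen v) p from ?_]
    · exact hG 0
    apply intervalIntegral.integral_congr
    intro t _
    beta_reduce
    have hpt : (t • midpt v 0 + (1 - t) • barycen v)
        = (fun i => v 0 i + (1/3 + t/6) * (v 1 i - v 0 i) + (1/3 + t/6) * (v 2 i - v 0 i)) := by
      funext i
      show t * ((v 1 i + v 2 i)/2) + (1 - t) * ((v 0 i + v 1 i + v 2 i)/3) = _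
      ring
    rw [hpt, hF]
    ring
  have g1 : P * ((c0 + c1/3 + c2/3 + c3/9 + c4/9 + c5/9)
      + (-c1/3 + c2/6 - 2*c3/9 - c4/18 + c5/9)/2 + (c3/9 - c4/18 + c5/36)/4)
      + D * (c3/9 - c4/18 + c5/36) = 0 := by
    rw [← hmom (c0 + c1/3 + c2/3 + c3/9 + c4/9 + c5/9)
      (-c1/3 + c2/6 - 2*c3/9 - c4/18 + c5/9) (c3/9 - c4/18 + c5/36)]
    rw [show (∫ t in (0:ℝ)..1, t ^ μ * (1 - t) ^ μ * ((c0 + c1/3 + c2/3 + c3/9 + c4/9 + c5/9)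
          + (-c1/3 + c2/6 - 2*c3/9 - c4/18 + c5/9)*t + (c3/9 - c4/18 + c5/36)*t^2))
        = ∫ t in (0:ℝ)..1, t ^ μ * (1 - t) ^ μ *
            MvPolynomial.eval (t • midpt v 1 + (1 - t) • barycen v) p from ?_]
    · exact hG 1
    apply intervalIntegral.integral_congr
    intro t _
    beta_reduce
    have hpt : (t • midpt v 1 + (1 - t) • barycen v)
        = (fun i => v 0 i + ((1 - t)/3) * (v 1 i - v 0 i) + (1/3 + t/6) * (v 2 i - v 0 i)) := by
      funext i
      show t * ((v 2 i + v 0 i)/2) + (1 - t) * ((v 0 i + v 1 i + v 2 i)/3) = _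
      ring
    rw [hpt, hF]
    ring
  have g2 : P * ((c0 + c1/3 + c2/3 + c3/9 + c4/9 + c5/9)
      + (c1/6 - c2/3 + c3/9 - c4/18 - 2*c5/9)/2 + (c3/36 - c4/18 + c5/9)/4)
      + D * (c3/36 - c4/18 + c5/9) = 0 := by
    rw [← hmom (c0 + c1/3 + c2/3 + c3/9 + c4/9 + c5/9)
      (c1/6 - c2/3 + c3/9 - c4/18 - 2*c5/9) (c3/36 - c4/18 + c5/9)]
    rw [show (∫ t in (0:ℝ)..1, t ^ μ * (1 - t) ^ μ * ((c0 + c1/3 + c2/3 + c3/9 + c4/9 + c5/9)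
          + (c1/6 - c2/3 + c3/9 - c4/18 - 2*c5/9)*t + (c3/36 - c4/18 + c5/9)*t^2))
        = ∫ t in (0:ℝ)..1, t ^ μ * (1 - t) ^ μ *
            MvPolynomial.eval (t • midpt v 2 + (1 - t) • barycen v) p from ?_]
    · exact hG 2
    apply intervalIntegral.integral_congr
    intro t _
    beta_reduce
    have hpt : (t • midpt v 2 + (1 - t) • barycen v)
        = (fun i => v 0 i + (1/3 + t/6) * (v 1 i - v 0 i) + ((1 - t)/3) * (v 2 i - v 0 i)) := by
      funext i
      show t * ((v 0 i + v 1 i)/2) + (1 - t) * ((v 0 i + v 1 i + v 2 i)/3) = _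
      ring
    rw [hpt, hF]
    ring
  -- linear algebra
  have hAeq : 3*c1 + 2*c3 + c4 = 0 := by linarith only [e0, e1, e2]
  have hBeq : 3*c2 + 2*c5 + c4 = 0 := by linarith only [e0, e1, e2]
  have hC0 : 6*c0 + 3*c2 + 2*c5 = 0 := by linarith only [e1]
  have hPD : (0:ℝ) < P + 4*D := by linarith only [hPpos, hD0]
  have hfac1 : (P + 4*D) * (c1 + c3) = 0 := by
    linear_combination (-16)*g0 + 16*g1 + ((5*P + 4*D)/3)*hAeq
  have hfac2 : (P + 4*D) * (c2 + c5) = 0 := by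
    linear_combination (-16)*g0 + 16*g2 + ((5*P + 4*D)/3)*hBeq
  have h13 : c3 = -c1 := by
    rcases mul_eq_zero.mp hfac1 with h | h
    · linarith only [hPD, h]
    · linarith only [h]
  have h25 : c5 = -c2 := by
    rcases mul_eq_zero.mp hfac2 with h | h
    · linarith only [hPD, h]
    · linarith only [h]
  have h41 : c4 = -c1 := by linarith only [hAeq, h13]
  have h42 : c2 = c1 := by linarith only [hBeq, h25, h41]
  have h51 : c5 = -c1 := by linarith only [h25, h42]
  have h01 : c0 = -c1/6 := by linarith only [hC0, h42, h51]
  rw [h13, h41, h42, h51, h01] at g0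
  have hkey : (7*P - 4*D) * c1 = 0 := by linear_combination 48*g0
  have hc1z : c1 = 0 := by
    rcases mul_eq_zero.mp hkey with h | h
    · linarith only [hPpos, hD4, h]
    · exact h
  have hz0 : c0 = 0 := by linarith only [h01, hc1z]
  have hz2 : c2 = 0 := by linarith only [h42, hc1z]
  have hz3 : c3 = 0 := by linarith only [h13, hc1z]
  have hz4 : c4 = 0 := by linarith only [h41, hc1z]
  have hz5 : c5 = 0 := by linarith only [h51, hc1z]
  -- conclude p = 0
  apply MvPolynomial.funext
  intro y
  obtain ⟨x0, x1, hxy⟩ := surj v hv y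
  have hy : y = fun i => v 0 i + x0 * (v 1 i - v 0 i) + x1 * (v 2 i - v 0 i) := funext hxy
  rw [hy, hF, hc1z, hz0, hz2, hz3, hz4, hz5]
  simp
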